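/- Let G be a graph, I ⊆ V(G) a set with at least two vertices, and v ∈ V(G) \ I. Then G has a chain from I to v if and only if every module of G containing I as a subset also contains v. -/

import Mathlib

variable {V : Type*}

def GraphModule (G : SimpleGraph V) (X : Set V) : Prop :=
  ∀ v ∉ X, (∀ x ∈ X, G.Adj v x) ∨ (∀ x ∈ X, ¬ G.Adj v x)

def IsPrimeGraph (G : SimpleGraph V) : Prop :=
  ∀ X : Set V, GraphModule G X → X.Subsingleton ∨ X = Set.univ

structure GraphChain (G : SimpleGraph V) (I : Set V) (w : V) (m : ℕ)
    (v : Fin (m + 1) → V) : Prop where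
  two_le : 2 ≤ m
  inj : Function.Injective v
  mem0 : v 0 ∈ I
  mem1 : v 1 ∈ I
  not_mem : ∀ i : Fin (m + 1), 2 ≤ (i : ℕ) → v i ∉ I
  last_eq : v (Fin.last m) = w
  uniq : ∀ i : Fin (m + 1), 0 < (i : ℕ) →
    (∀ j : Fin (m + 1), (j : ℕ) < (i : ℕ) → (G.Adj (v i) (v j) ↔ (j : ℕ) + 1 = (i : ℕ))) ∨
    (∀ j : Fin (m + 1), (j : ℕ) < (i : ℕ) → (¬ G.Adj (v i) (v j) ↔ (j : ℕ) + 1 = (i : ℕ)))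

def HasChain (G : SimpleGraph V) (I : Set V) (w : V) : Prop :=
  ∃ m v, GraphChain G I w m v

lemma fin_mk_zero {m : ℕ} (h : 0 < m + 1) : (⟨0, h⟩ : Fin (m + 1)) = 0 := by
  ext; simp

lemma fin_mk_one {m : ℕ} (h : 1 < m + 1) : (⟨1, h⟩ : Fin (m + 1)) = 1 := by
  ext; simp [Fin.val_one', Nat.mod_eq_of_lt h]

lemma chain_trunc {G : SimpleGraph V} {I : Set V} {w : V} {m : ℕ} {v : Fin (m + 1) → V}
    (hc : GraphChain G I w m v) {k : ℕ} (hk2 : 2 ≤ k) (hkm : k ≤ m) :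
    HasChain G I (v ⟨k, by omega⟩) := by
  refine ⟨k, fun j => v ⟨j.val, by omega⟩, hk2, ?_, ?_, ?_, ?_, ?_, ?_⟩
  · intro j1 j2 hj
    have h2 : (j1 : ℕ) = (j2 : ℕ) := by
      simpa using congrArg Fin.val (hc.inj hj)
    exact Fin.ext h2
  · show v ⟨((0 : Fin (k + 1)) : ℕ), by omega⟩ ∈ I
    have e : v ⟨((0 : Fin (k + 1)) : ℕ), by omega⟩ = v 0 :=
      congrArg v (Fin.ext (by simp))
    rw [e]; exact hc.mem0
  · show v ⟨((1 : Fin (k + 1)) : ℕ), by omega⟩ ∈ I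
    have e : v ⟨((1 : Fin (k + 1)) : ℕ), by omega⟩ = v 1 :=
      congrArg v (Fin.ext (by
        simp [Fin.val_one', Nat.mod_eq_of_lt (show 1 < k + 1 by omega),
          Nat.mod_eq_of_lt (show 1 < m + 1 by omega)]))
    rw [e]; exact hc.mem1
  · intro i hi
    exact hc.not_mem ⟨i.val, by omega⟩ hi
  · show v ⟨((Fin.last k : Fin (k + 1)) : ℕ), by omega⟩ = v ⟨k, by omega⟩
    rfl
  · intro i hi
    rcases hc.uniq ⟨i.val, by omega⟩ hi with h | h
    · exact Or.inl fun j hj => h ⟨j.val, by omega⟩ hj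
    · exact Or.inr fun j hj => h ⟨j.val, by omega⟩ hj

lemma chain_extend {G : SimpleGraph V} {I : Set V} {w : V} {m : ℕ} {v : Fin (m + 1) → V}
    (hc : GraphChain G I w m v) {u : V} (hu : u ∉ I)
    (hune : ∀ j : Fin (m + 1), u ≠ v j)
    {i : ℕ} (hi2 : 2 ≤ i) (him : i ≤ m)
    (h : ((∀ j : ℕ, (hj : j < i) → G.Adj u (v ⟨j, by omega⟩)) ∧ ¬ G.Adj u (v ⟨i, by omega⟩)) ∨
         ((∀ j : ℕ, (hj : j < i) → ¬ G.Adj u (v ⟨j, by omega⟩)) ∧ G.Adj u (v ⟨i, by omega⟩))) :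
    HasChain G I u := by
  classical
  set f : Fin (i + 2) → V :=
    fun j => if hj : (j : ℕ) < i + 1 then v ⟨j.val, by omega⟩ else u with hfdef
  have hfv : ∀ (j : Fin (i + 2)) (hj : (j : ℕ) < i + 1), f j = v ⟨j.val, by omega⟩ := by
    intro j hj
    simp only [hfdef]
    rw [dif_pos hj]
  have hfu : ∀ (j : Fin (i + 2)), ¬ (j : ℕ) < i + 1 → f j = u := by
    intro j hj
    simp only [hfdef]
    rw [dif_neg hj]
  have v0 : ((0 : Fin (i + 2)) : ℕ) = 0 := by simp
  have v1 : ((1 : Fin (i + 2)) : ℕ) = 1 := by simp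
  refine ⟨i + 1, f, by omega, ?_, ?_, ?_, ?_, ?_, ?_⟩
  · intro j1 j2 hj
    by_cases h1 : (j1 : ℕ) < i + 1 <;> by_cases h2 : (j2 : ℕ) < i + 1
    · rw [hfv j1 h1, hfv j2 h2] at hj
      have := congrArg Fin.val (hc.inj hj)
      simp only at this
      exact Fin.ext this
    · rw [hfv j1 h1, hfu j2 h2] at hj
      exact absurd hj.symm (hune _)
    · rw [hfu j1 h1, hfv j2 h2] at hj
      exact absurd hj (hune _)
    · have b1 := j1.isLt
      have b2 := j2.isLt
      exact Fin.ext (by omega)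
  · rw [hfv 0 (by omega)]
    have e : v ⟨((0 : Fin (i + 2)) : ℕ), by omega⟩ = v 0 :=
      congrArg v (Fin.ext (by simp))
    rw [e]; exact hc.mem0
  · rw [hfv 1 (by omega)]
    have e : v ⟨((1 : Fin (i + 2)) : ℕ), by omega⟩ = v 1 :=
      congrArg v (Fin.ext (by
        simp [v1, Fin.val_one', Nat.mod_eq_of_lt (show 1 < m + 1 by omega)]))
    rw [e]; exact hc.mem1
  · intro j hj
    by_cases hji : (j : ℕ) < i + 1
    · rw [hfv j hji]
      exact hc.not_mem ⟨j.val, by omega⟩ hj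
    · rw [hfu j hji]
      exact hu
  · rw [hfu (Fin.last (i + 1)) (by simp)]
  · intro p hp
    by_cases hpi : (p : ℕ) < i + 1
    · rw [hfv p hpi]
      rcases hc.uniq ⟨p.val, by omega⟩ hp with hq | hq
      · refine Or.inl fun j hj => ?_
        rw [hfv j (by omega)]
        exact hq ⟨j.val, by omega⟩ hj
      · refine Or.inr fun j hj => ?_
        rw [hfv j (by omega)]
        exact hq ⟨j.val, by omega⟩ hj
    · have hpv : (p : ℕ) = i + 1 := by
        have := p.isLt; omega
      rw [hfu p hpi]
      rcases h with ⟨hall, hlast⟩ | ⟨hall, hlast⟩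
      · refine Or.inr fun j hj => ?_
        rw [hfv j (by omega)]
        rcases Nat.lt_or_ge (j : ℕ) i with hji | hji
        · exact ⟨fun hn => absurd (hall j.val hji) hn, fun heq => absurd heq (by omega)⟩
        · have hje : (j : ℕ) = i := by omega
          have e : v (⟨j.val, by omega⟩ : Fin (m + 1)) = v ⟨i, by omega⟩ :=
            congrArg v (Fin.ext hje)
          rw [e]
          exact ⟨fun _ => by omega, fun _ => hlast⟩
      · refine Or.inl fun j hj => ?_
        rw [hfv j (by omega)]
        rcases Nat.lt_or_ge (j : ℕ) i with hji | hji
        · exact ⟨fun hn => absurd hn (hall j.val hji), fun heq => absurd heq (by omega)⟩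
        · have hje : (j : ℕ) = i := by omega
          have e : v (⟨j.val, by omega⟩ : Fin (m + 1)) = v ⟨i, by omega⟩ :=
            congrArg v (Fin.ext hje)
          rw [e]
          exact ⟨fun _ => by omega, fun _ => hlast⟩

lemma chain_two {G : SimpleGraph V} {I : Set V} {u a b : V}
    (ha : a ∈ I) (hb : b ∈ I) (hu : u ∉ I)
    (hna : ¬ G.Adj u a) (hab : G.Adj u b) : HasChain G I u := by
  have hne : a ≠ b := fun h => hna (h ▸ hab)
  have hua : u ≠ a := fun h => hu (h ▸ ha)
  have hub : u ≠ b := fun h => hu (h ▸ hb)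
  refine ⟨2, ![a, b, u], le_refl 2, ?_, by simp [ha], by simp [hb], ?_, rfl, ?_⟩
  · intro j1 j2 hj
    fin_cases j1 <;> fin_cases j2 <;> simp_all <;> tauto
  · intro j hj
    fin_cases j <;> simp_all
  · intro i hi
    fin_cases i
    · simp at hi
    · by_cases hba : G.Adj b a
      · refine Or.inl fun j hj => ?_
        fin_cases j
        · simpa using hba
        · simp at hj
        · simp at hj
      · refine Or.inr fun j hj => ?_
        fin_cases j
        · simpa using hba
        · simp at hj
        · simp at hj
    · refine Or.inl fun j hj => ?_
      fin_cases j
      · simpa using hna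
      · simpa using hab
      · simp at hj

theorem statement1 (G : SimpleGraph V) (I : Set V)
    (hI : ∃ x ∈ I, ∃ y ∈ I, x ≠ y) (v : V) (hv : v ∉ I) :
    HasChain G I v ↔ ∀ X : Set V, GraphModule G X → I ⊆ X → v ∈ X := by
  constructor
  · rintro ⟨m, vv, hc⟩ X hX hIX
    have key : ∀ n : ℕ, ∀ hn : n < m + 1, vv ⟨n, hn⟩ ∈ X := by
      intro n
      induction n using Nat.strong_induction_on with
      | _ n IH =>
        intro hn
        rcases n with _ | n
        · rw [fin_mk_zero hn]
          exact hIX hc.mem0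
        rcases n with _ | n
        · rw [fin_mk_one hn]
          exact hIX hc.mem1
        by_contra hvn
        have h0 : vv ⟨0, by omega⟩ ∈ X := IH 0 (by omega) _
        have h1 : vv ⟨n + 1, by omega⟩ ∈ X := IH (n + 1) (by omega) _
        rcases hX _ hvn with hall | hnone <;>
          rcases hc.uniq ⟨n + 2, hn⟩ (by simp) with huq | huq
        · have := (huq ⟨0, by omega⟩ (by simp)).mp (hall _ h0)
          simp at this
        · have := (huq ⟨n + 1, by omega⟩ (by simp)).mpr (by simp)
          exact this (hall _ h1)
        · have := (huq ⟨n + 1, by omega⟩ (by simp)).mpr (by simp)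
          exact hnone _ h1 this
        · have hadj : G.Adj (vv ⟨n + 2, hn⟩) (vv ⟨0, by omega⟩) := by
            by_contra hno
            exact absurd ((huq ⟨0, by omega⟩ (by simp)).mp hno)
              (show ¬ (0 + 1 = n + 2) by omega)
          exact hnone _ h0 hadj
    have := key m (by omega)
    rwa [show (⟨m, by omega⟩ : Fin (m + 1)) = Fin.last m from rfl, hc.last_eq] at this
  · intro hmod
    classical
    set X : Set V := I ∪ {w | HasChain G I w} with hXdef
    have hXmod : GraphModule G X := by
      intro u hu
      have huI : u ∉ I := fun h => hu (Or.inl h)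
      have huC : ¬ HasChain G I u := fun h => hu (Or.inr h)
      by_contra hcon
      push_neg at hcon
      obtain ⟨⟨a, ha, hna⟩, ⟨b, hb, hab⟩⟩ := hcon
      have extend_case : ∀ (c : V), c ∈ X → c ∉ I →
          ∀ (pol : Bool), (if pol then ¬ G.Adj u c else G.Adj u c) →
          (∀ z ∈ I, if pol then G.Adj u z else ¬ G.Adj u z) → False := by
        intro c hcX hcI pol hpc hpol
        obtain ⟨k, vv, hck⟩ : HasChain G I c := hcX.resolve_left hcI
        have hune : ∀ j : Fin (k + 1), u ≠ vv j := by
          intro j he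
          rcases Nat.lt_or_ge (j : ℕ) 2 with hj | hj
          · have hj01 : (j : ℕ) = 0 ∨ (j : ℕ) = 1 := by omega
            rcases hj01 with h' | h'
            · refine huI (he ▸ ?_)
              rw [show j = 0 from Fin.ext (by simp [h'])]
              exact hck.mem0
            · refine huI (he ▸ ?_)
              rw [show j = 1 from Fin.ext (by
                simp [h', Fin.val_one',
                  Nat.mod_eq_of_lt (show 1 < k + 1 by have := hck.two_le; omega)])]
              exact hck.mem1
          · have ht := chain_trunc hck hj (show (j : ℕ) ≤ k by have := j.isLt; omega)
            have e : vv (⟨(j : ℕ), by omega⟩ : Fin (k + 1)) = vv j := congrArg vv (Fin.ext rfl)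
            rw [e] at ht
            exact huC (he ▸ ht)
        have hlast : vv (Fin.last k) = c := hck.last_eq
        have hP : ∃ n, ∃ hnk : n < k + 1,
            (if pol then ¬ G.Adj u (vv ⟨n, hnk⟩) else G.Adj u (vv ⟨n, hnk⟩)) := by
          refine ⟨k, by omega, ?_⟩
          have e : vv (⟨k, by omega⟩ : Fin (k + 1)) = c := by
            rw [show (⟨k, by omega⟩ : Fin (k + 1)) = Fin.last k from rfl, hlast]
          rw [e]
          exact hpc
        obtain ⟨hik, hadi⟩ := Nat.find_spec hP
        have hmin : ∀ (j : ℕ) (_hj : j < Nat.find hP), ¬ (if pol then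
            ¬ G.Adj u (vv ⟨j, by omega⟩) else G.Adj u (vv ⟨j, by omega⟩)) := by
          intro j hj
          have hm := Nat.find_min hP hj
          push_neg at hm
          intro hbad
          exact absurd hbad (hm (by omega))
        have hi2 : 2 ≤ Nat.find hP := by
          by_contra hlt
          have hi01 : Nat.find hP = 0 ∨ Nat.find hP = 1 := by omega
          have hmem : vv ⟨Nat.find hP, by omega⟩ ∈ I := by
            rcases hi01 with h' | h'
            · have e : (⟨Nat.find hP, by omega⟩ : Fin (k + 1)) = 0 := Fin.ext (by rw [Fin.val_zero]; exact h')
              rw [e]; exact hck.mem0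
            · have e : (⟨Nat.find hP, by omega⟩ : Fin (k + 1)) = 1 := Fin.ext (by
                rw [show ((1 : Fin (k + 1)) : ℕ) = 1 by simp [Fin.val_one',
                  Nat.mod_eq_of_lt (show 1 < k + 1 by have := hck.two_le; omega)]]; exact h')
              rw [e]; exact hck.mem1
          have := hpol _ hmem
          cases pol <;> simp_all
        refine huC (chain_extend hck huI hune hi2 (by omega : Nat.find hP ≤ k) ?_)
        cases pol
        · refine Or.inr ⟨fun j hj => ?_, by simpa using hadi⟩
          have := hmin j hj
          simpa using this
        · refine Or.inl ⟨fun j hj => ?_, by simpa using hadi⟩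
          have := hmin j hj
          simpa using this
      by_cases hAI : ∀ z ∈ I, G.Adj u z
      · have haI : a ∉ I := fun h => hna (hAI a h)
        exact extend_case a ha haI true (by simpa using hna) (by simpa using hAI)
      · by_cases hNI : ∀ z ∈ I, ¬ G.Adj u z
        · have hbI : b ∉ I := fun h => (hNI b h) hab
          exact extend_case b hb hbI false (by simpa using hab) (by simpa using hNI)
        · push_neg at hAI hNI
          obtain ⟨za, hza, hzan⟩ := hAI
          obtain ⟨zb, hzb, hzb2⟩ := hNI
          exact huC (chain_two hza hzb huI hzan hzb2)
    have hvX : v ∈ X := hmod X hXmod (fun z hz => Or.inl hz)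
    rcases hvX with h | h
    · exact absurd h hv
    · exact h
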